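/- arXiv:2103.09549 — 5 statements merged into one kernel-verified Lean document; each statement's English description precedes it below -/
import Mathlib

section
/- Let D be a triangulated category with shift functor Σ, and let (T,F) be a pair of classes of objects of D, each closed under isomorphism, satisfying (STP1) and (STP2). Then the following are equivalent: (1) Hom_D(T, Σ⁻¹F) = 0 for all T ∈ T and F ∈ F; (2) T is closed under positive shift, i.e. ΣT ∈ T for every T ∈ T; (3) F is closed under negative shift, i.e. Σ⁻¹F ∈ F for every F ∈ F. -/
open CategoryTheory Limits Pretriangulated

universe v u

variable (D : Type u) [Category.{v} D] [HasZeroObject D] [HasShift D ℤ]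
  [Preadditive D] [∀ n : ℤ, (shiftFunctor D n).Additive] [Pretriangulated D]

/-- A class of objects closed under isomorphisms. -/
def IsoClosed (S : Set D) : Prop := ∀ ⦃X Y : D⦄, (X ≅ Y) → X ∈ S → Y ∈ S

/-- (STP1): every object sits in a distinguished triangle with first term in `T`
and third term in `F`. -/
def STP1 (T F : Set D) : Prop :=
  ∀ X : D, ∃ (A B : D) (f : A ⟶ X) (g : X ⟶ B) (h : B ⟶ A⟦(1 : ℤ)⟧),
    Triangle.mk f g h ∈ (distTriang D) ∧ A ∈ T ∧ B ∈ F

/-- (STP2): `Hom(T, F) = 0`. -/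
def STP2 (T F : Set D) : Prop :=
  ∀ A ∈ T, ∀ B ∈ F, ∀ f : A ⟶ B, f = 0

/-- (STP3): `Hom(T, Σ⁻¹ F) = 0`. -/
def STP3 (T F : Set D) : Prop :=
  ∀ A ∈ T, ∀ B ∈ F, ∀ f : A ⟶ B⟦(-1 : ℤ)⟧, f = 0

/-- An `s`-torsion pair in a triangulated category: a pair of iso-closed classes
satisfying (STP1), (STP2) and (STP3). -/
def IsSTorsionPair (T F : Set D) : Prop :=
  IsoClosed D T ∧ IsoClosed D F ∧ STP1 D T F ∧ STP2 D T F ∧ STP3 D T F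

lemma stp3_shift {T F : Set D} (h3 : STP3 D T F) {A B : D} (hA : A ∈ T) (hB : B ∈ F)
    (r : A⟦(1 : ℤ)⟧ ⟶ B) : r = 0 := by
  have ht : (shiftFunctorCompIsoId D (1 : ℤ) (-1) (by ring)).inv.app A ≫ r⟦(-1 : ℤ)⟧' = 0 :=
    h3 _ hA _ hB _
  have hr : r⟦(-1 : ℤ)⟧' = 0 := by
    have := (shiftFunctorCompIsoId D (1 : ℤ) (-1) (by ring)).hom.app A ≫= ht
    simpa using this
  apply (shiftFunctor D (-1 : ℤ)).map_injective
  simpa using hr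

lemma shift_stp3 {T F : Set D} (h2 : STP2 D T F)
    (hT : ∀ X ∈ T, X⟦(1 : ℤ)⟧ ∈ T) : STP3 D T F := by
  intro A hA B hB f
  have h : f⟦(1 : ℤ)⟧' ≫ (shiftFunctorCompIsoId D (-1 : ℤ) 1 (by ring)).hom.app B = 0 :=
    h2 _ (hT A hA) _ hB _
  have hf : f⟦(1 : ℤ)⟧' = 0 := by
    have := h =≫ (shiftFunctorCompIsoId D (-1 : ℤ) 1 (by ring)).inv.app B
    simpa using this
  apply (shiftFunctor D (1 : ℤ)).map_injective
  simpa using hf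

/-- Lemma: "shift-closed".
Let `D` be a triangulated category with shift functor `Σ`, and let `(T, F)` be a pair of
iso-closed classes of objects of `D` satisfying (STP1) and (STP2).  Then the following are
equivalent: (1) `Hom(T, Σ⁻¹F) = 0`; (2) `T` is closed under positive shift;
(3) `F` is closed under negative shift. -/
theorem stmt0 (T F : Set D)
    (hTiso : IsoClosed D T) (hFiso : IsoClosed D F)
    (h1 : STP1 D T F) (h2 : STP2 D T F) :
    (STP3 D T F ↔ ∀ X ∈ T, X⟦(1 : ℤ)⟧ ∈ T) ∧
    (STP3 D T F ↔ ∀ X ∈ F, X⟦(-1 : ℤ)⟧ ∈ F) := by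
  constructor
  · constructor
    · intro h3 X hX
      obtain ⟨A, B, f, g, h, hdt, hA, hB⟩ := h1 (X⟦(1 : ℤ)⟧)
      have hg : g = 0 := stp3_shift D h3 hX hB g
      obtain ⟨r, hr⟩ := Triangle.yoneda_exact₃ _ hdt (𝟙 B) (by simp [hg]; exact zero_comp)
      have hr0 : r = 0 := stp3_shift D h3 hA hB r
      have hBzero : IsZero B := by
        rw [IsZero.iff_id_eq_zero, hr, hr0, comp_zero]
        rfl
      have : IsIso f := (Triangle.isZero₃_iff_isIso₁ _ hdt).1 hBzero
      exact hTiso (asIso f) hA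
    · exact fun h => shift_stp3 D h2 h
  · constructor
    · intro h3 Y hY
      obtain ⟨A, B, f, g, h, hdt, hA, hB⟩ := h1 (Y⟦(-1 : ℤ)⟧)
      have hf : f = 0 := h3 _ hA _ hY f
      have hdt' := inv_rot_of_distTriang _ hdt
      obtain ⟨t, ht⟩ := Triangle.coyoneda_exact₂ _ hdt' (𝟙 A) (by simp; exact (Category.id_comp f).trans hf)
      have ht0 : t = 0 := h3 _ hA _ hB t
      have hAzero : IsZero A := by
        rw [IsZero.iff_id_eq_zero, ht, ht0, zero_comp]
        rfl
      have : IsIso g := (Triangle.isZero₁_iff_isIso₂ _ hdt).1 hAzero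
      exact hFiso (asIso g).symm hB
    · intro h A hA B hB f
      exact h2 _ hA _ (h B hB) f
end

section
/- Let D be a triangulated category with shift functor Σ and let (T,F) be an s-torsion pair in D. Then the inclusion functor of the full subcategory of D on the objects of T admits a right adjoint, and the inclusion functor of the full subcategory of D on the objects of F admits a left adjoint. -/
open CategoryTheory Limits Pretriangulated

universe v u

variable (D : Type u) [Category.{v} D] [HasZeroObject D] [HasShift D ℤ]
  [Preadditive D] [∀ n : ℤ, (shiftFunctor D n).Additive] [Pretriangulated D]

/-- adjoints to the inclusions.
Let `(T, F)` be an `s`-torsion pair in `D`.  Then the inclusion of the full subcategory on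
the objects of `T` admits a right adjoint (i.e. it is a left adjoint), and the inclusion of
the full subcategory on the objects of `F` admits a left adjoint (i.e. it is a right
adjoint). -/
theorem stmt3 (T F : Set D) (h : IsSTorsionPair D T F) :
    (ObjectProperty.ι (· ∈ T)).IsLeftAdjoint ∧
    (ObjectProperty.ι (· ∈ F)).IsRightAdjoint := by
  obtain ⟨-, -, h1, h2, h3⟩ := h
  constructor
  · rw [isLeftAdjoint_iff_hasTerminal_costructuredArrow]
    intro X
    obtain ⟨A, B, f, g, hmor, hdt, hA, hB⟩ := h1 X
    -- key : any map to A killing f is zero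
    have key : ∀ (W : D) (_ : W ∈ T) (w : W ⟶ A), w ≫ f = 0 → w = 0 := by
      intro W hW w hw
      obtain ⟨u, hu⟩ := Triangle.coyoneda_exact₂ _ (inv_rot_of_distTriang _ hdt) w hw
      rw [hu, h3 W hW B hB u]; exact zero_comp
    have term : CostructuredArrow (ObjectProperty.ι (· ∈ T)) X :=
      CostructuredArrow.mk (Y := ObjectProperty.FullSubcategory.mk A hA) f
    refine IsTerminal.hasTerminal
      (X := (CostructuredArrow.mk (Y := ObjectProperty.FullSubcategory.mk A hA) f :
        CostructuredArrow (ObjectProperty.ι (· ∈ T)) X))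
      (IsTerminal.ofUniqueHom ?_ ?_)
    · intro Z
      have hw := Triangle.coyoneda_exact₂ _ hdt Z.hom
        (h2 Z.left.obj Z.left.property B hB _)
      exact CostructuredArrow.homMk (ObjectProperty.homMk hw.choose) hw.choose_spec.symm
    · intro Z m
      ext
      have hw := Triangle.coyoneda_exact₂ _ hdt Z.hom
        (h2 Z.left.obj Z.left.property B hB _)
      let w : Z.left.obj ⟶ A := hw.choose
      have hws : Z.hom = w ≫ f := hw.choose_spec
      let u : Z.left.obj ⟶ A := m.left.hom
      have h₁ : u ≫ f = Z.hom := CostructuredArrow.w m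
      have hsub : (u - w) ≫ f = 0 := by
        rw [Preadditive.sub_comp, h₁, hws, sub_self]
      have hz := key Z.left.obj Z.left.property _ hsub
      have hz' : u = w := by rwa [sub_eq_zero] at hz
      exact hz'
  · rw [isRightAdjoint_iff_hasInitial_structuredArrow]
    intro X
    obtain ⟨A, B, f, g, hmor, hdt, hA, hB⟩ := h1 X
    -- key : any map from B killed by g is zero
    have key : ∀ (W : D) (_ : W ∈ F) (k : B ⟶ W), g ≫ k = 0 → k = 0 := by
      intro W hW k hk
      obtain ⟨l, hl⟩ := Triangle.yoneda_exact₃ _ hdt k hk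
      have hl0 : l = 0 := by
        have h4 : (shiftEquiv D (1 : ℤ)).unitIso.hom.app A ≫ l⟦(-1 : ℤ)⟧' = 0 :=
          h3 A hA W hW _
        have h5 : l⟦(-1 : ℤ)⟧' = 0 := by
          exact (cancel_epi ((shiftEquiv D (1 : ℤ)).unitIso.hom.app A)).1 (h4.trans comp_zero.symm)
        exact (shiftFunctor D (-1 : ℤ)).map_injective (by simpa using h5)
      rw [hl, hl0]; exact comp_zero
    refine IsInitial.hasInitial
      (X := (StructuredArrow.mk (Y := ObjectProperty.FullSubcategory.mk B hB) g :
        StructuredArrow X (ObjectProperty.ι (· ∈ F))))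
      (IsInitial.ofUniqueHom ?_ ?_)
    · intro Z
      have hk := Triangle.yoneda_exact₂ _ hdt Z.hom
        (h2 A hA Z.right.obj Z.right.property _)
      exact StructuredArrow.homMk (ObjectProperty.homMk hk.choose) hk.choose_spec.symm
    · intro Z m
      ext
      have hk := Triangle.yoneda_exact₂ _ hdt Z.hom
        (h2 A hA Z.right.obj Z.right.property _)
      let k : B ⟶ Z.right.obj := hk.choose
      have hks : Z.hom = g ≫ k := hk.choose_spec
      let u : B ⟶ Z.right.obj := m.right.hom
      have h₁ : g ≫ u = Z.hom := StructuredArrow.w m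
      have hsub : g ≫ (u - k) = 0 := by
        rw [Preadditive.comp_sub, h₁, hks, sub_self]
      have hz := key Z.right.obj Z.right.property _ hsub
      have hz' : u = k := by rwa [sub_eq_zero] at hz
      exact hz'
end

section
/- Let D be a triangulated category with shift functor Σ and let (T',F') and (T,F) be s-torsion pairs in D with T' ⊆ T. Then: (1) every object M ∈ T fits into a distinguished triangle T₀ → M → H → ΣT₀ with T₀ ∈ T' and H ∈ T ∩ F'; (2) every object M ∈ F' fits into a distinguished triangle H → M → F₀ → ΣH with H ∈ T ∩ F' and F₀ ∈ F. Conversely, any object admitting such a triangle as in (1) lies in T, and any object admitting such a triangle as in (2) lies in F'. -/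
open CategoryTheory Limits Pretriangulated

universe v u

variable (D : Type u) [Category.{v} D] [HasZeroObject D] [HasShift D ℤ]
  [Preadditive D] [∀ n : ℤ, (shiftFunctor D n).Additive] [Pretriangulated D]

/-- `star X Y` is the class of objects `M` admitting a distinguished triangle
`A → M → B → ΣA` with `A ∈ X` and `B ∈ Y`. -/
def star (X Y : Set D) : Set D :=
  {M : D | ∃ (A B : D) (f : A ⟶ M) (g : M ⟶ B) (h : B ⟶ A⟦(1 : ℤ)⟧),
    Triangle.mk f g h ∈ (distTriang D) ∧ A ∈ X ∧ B ∈ Y}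

/-- If `Hom(A, B⟦-1⟧) = 0` then `Hom(A⟦1⟧, B) = 0`, via the shift adjunction. -/
lemma shift_hom_zero {A B : D} (hz : ∀ f : A ⟶ B⟦(-1 : ℤ)⟧, f = 0)
    (g : A⟦(1 : ℤ)⟧ ⟶ B) : g = 0 := by
  set e := (shiftEquiv D (1 : ℤ)).toAdjunction.homEquiv A B with he
  apply e.injective
  have h1 : e g = 0 := hz _
  have h2 : e (0 : A⟦(1 : ℤ)⟧ ⟶ B) = 0 := by
    exact (Adjunction.homEquiv_unit _ _ _ _).trans
      ((congrArg _ ((shiftFunctor D (-1 : ℤ)).map_zero _ _)).trans comp_zero)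
  rw [h1, h2]

/-- An object with no nonzero maps to `F` lies in `T`. -/
lemma memT_of_hom_zero (T F : Set D) (h : IsSTorsionPair D T F) (M : D)
    (hz : ∀ B ∈ F, ∀ f : M ⟶ B, f = 0) : M ∈ T := by
  obtain ⟨Tiso, _, stp1, _, stp3⟩ := h
  obtain ⟨A, B, f, g, w, hdt, hA, hB⟩ := stp1 M
  have hg : g = 0 := hz B hB g
  have hid : (𝟙 B : B ⟶ B) = 0 := by
    obtain ⟨φ, hφ⟩ := Triangle.yoneda_exact₃ _ hdt (𝟙 B)
      (by change g ≫ 𝟙 B = 0; rw [hg, zero_comp])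
    rw [hφ, shift_hom_zero D (fun f => stp3 A hA B hB f) φ]; exact comp_zero
  have hB0 : IsZero B := by rw [IsZero.iff_id_eq_zero]; exact hid
  have : IsIso f := (Triangle.isZero₃_iff_isIso₁ _ hdt).1 hB0
  exact Tiso (asIso f) hA

/-- An object with no nonzero maps from `T` lies in `F`. -/
lemma memF_of_hom_zero (T F : Set D) (h : IsSTorsionPair D T F) (M : D)
    (hz : ∀ A ∈ T, ∀ f : A ⟶ M, f = 0) : M ∈ F := by
  obtain ⟨_, Fiso, stp1, _, stp3⟩ := h
  obtain ⟨A, B, f, g, w, hdt, hA, hB⟩ := stp1 M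
  have hf : f = 0 := hz A hA f
  have hid : (𝟙 A : A ⟶ A) = 0 := by
    obtain ⟨φ, hφ⟩ := Triangle.coyoneda_exact₂ _
      (inv_rot_of_distTriang _ hdt) (𝟙 A) (by simp [hf]; exact comp_zero)
    rw [hφ, stp3 A hA B hB φ]; exact zero_comp
  have hA0 : IsZero A := by rw [IsZero.iff_id_eq_zero]; exact hid
  have : IsIso g := (Triangle.isZero₁_iff_isIso₂ _ hdt).1 hA0
  exact Fiso (asIso g).symm hB

/-- Lemma on hearts.
Let `(T', F')` and `(T, F)` be `s`-torsion pairs in `D` with `T' ⊆ T`.  Then an object lies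
in `T` if and only if it admits a distinguished triangle `T₀ → M → H → ΣT₀` with `T₀ ∈ T'`
and `H ∈ T ∩ F'`, and an object lies in `F'` if and only if it admits a distinguished
triangle `H → M → F₀ → ΣH` with `H ∈ T ∩ F'` and `F₀ ∈ F`. -/
theorem stmt4 (T' F' T F : Set D)
    (h' : IsSTorsionPair D T' F') (h : IsSTorsionPair D T F) (hsub : T' ⊆ T) :
    T = star D T' (T ∩ F') ∧ F' = star D (T ∩ F') F := by
  obtain ⟨T'iso, F'iso, stp1', stp2', stp3'⟩ := h'
  obtain ⟨Tiso, Fiso, stp1, stp2, stp3⟩ := h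
  constructor
  · apply Set.eq_of_subset_of_subset
    · -- T ⊆ star T' (T ∩ F')
      intro M hM
      obtain ⟨A, B, f, g, w, hdt, hA, hB⟩ := stp1' M
      refine ⟨A, B, f, g, w, hdt, hA, ?_, hB⟩
      -- B ∈ T : show Hom(B, F) = 0
      refine memT_of_hom_zero D T F ⟨Tiso, Fiso, stp1, stp2, stp3⟩ B ?_
      intro C hC φ
      obtain ⟨ψ, hψ⟩ := Triangle.yoneda_exact₃ _ hdt φ
        (by exact stp2 M hM C hC _)
      rw [hψ, shift_hom_zero D (fun q => stp3 A (hsub hA) C hC q) ψ]; exact comp_zero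
    · -- star T' (T ∩ F') ⊆ T
      intro M hM
      obtain ⟨A, B, f, g, w, hdt, hA, hBT, _⟩ := hM
      refine memT_of_hom_zero D T F ⟨Tiso, Fiso, stp1, stp2, stp3⟩ M ?_
      intro C hC φ
      obtain ⟨ψ, hψ⟩ := Triangle.yoneda_exact₂ _ hdt φ
        (by exact stp2 A (hsub hA) C hC _)
      rw [hψ, stp2 B hBT C hC ψ]; exact comp_zero
  · apply Set.eq_of_subset_of_subset
    · -- F' ⊆ star (T ∩ F') F
      intro M hM
      obtain ⟨A, B, f, g, w, hdt, hA, hB⟩ := stp1 M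
      refine ⟨A, B, f, g, w, hdt, ⟨hA, ?_⟩, hB⟩
      -- A ∈ F' : show Hom(T', A) = 0
      refine memF_of_hom_zero D T' F' ⟨T'iso, F'iso, stp1', stp2', stp3'⟩ A ?_
      intro C hC φ
      obtain ⟨ψ, hψ⟩ := Triangle.coyoneda_exact₂ _
        (inv_rot_of_distTriang _ hdt) φ
        (by exact stp2' C hC M hM _)
      rw [hψ, stp3 C (hsub hC) B hB ψ]; exact zero_comp
    · -- star (T ∩ F') F ⊆ F'
      intro M hM
      obtain ⟨A, B, f, g, w, hdt, ⟨_, hAF'⟩, hB⟩ := hM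
      refine memF_of_hom_zero D T' F' ⟨T'iso, F'iso, stp1', stp2', stp3'⟩ M ?_
      intro C hC φ
      obtain ⟨ψ, hψ⟩ := Triangle.coyoneda_exact₂ _ hdt φ
        (by exact stp2 C (hsub hC) B hB _)
      rw [hψ, stp2' C hC A hAF' ψ]; exact zero_comp
end

section
/- Let D be a triangulated category with shift functor Σ, let (U₁,V₁) and (U₂,V₂) be t-structures on D with U₁ ⊆ U₂, and set H = U₂ ∩ V₁. Then the maps Φ(T,F) = (T ∩ V₁, U₂ ∩ F) and Ψ(X,Y) = (U₁∗X, Y∗V₂) are mutually inverse, order-preserving bijections between the set of t-structures (T,F) on D with U₁ ⊆ T ⊆ U₂ (ordered by inclusion of the first components) and the set of s-torsion pairs in H (ordered by inclusion of the first components). Here U₁∗X is the class of objects M admitting a distinguished triangle U → M → X → ΣU with U ∈ U₁ and X ∈ X, and Y∗V₂ is the class of objects M admitting a distinguished triangle Y → M → V → ΣY with Y ∈ Y and V ∈ V₂. -/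
open CategoryTheory Limits Pretriangulated

universe v u

variable (D : Type u) [Category.{v} D] [HasZeroObject D] [HasShift D ℤ]
  [Preadditive D] [∀ n : ℤ, (shiftFunctor D n).Additive] [Pretriangulated D]

/-- A `t`-structure on `D`: a pair of iso-closed classes satisfying (STP1), (STP2), and
closedness of the first class under positive shift. -/
def IsTStructure (U V : Set D) : Prop :=
  IsoClosed D U ∧ IsoClosed D V ∧ STP1 D U V ∧ STP2 D U V ∧
    ∀ X ∈ U, X⟦(1 : ℤ)⟧ ∈ U

/-- An `s`-torsion pair in a class `H` of objects of `D`: a pair of iso-closed subclasses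
`(X, Y)` of `H` such that every object of `H` sits in a distinguished triangle with ends in
`X` and `Y`, with `Hom(X, Y) = 0` and `Hom(X, Σ⁻¹Y) = 0`. -/
def IsSTorsionPairIn (H X Y : Set D) : Prop :=
  X ⊆ H ∧ Y ⊆ H ∧ IsoClosed D X ∧ IsoClosed D Y ∧
  (∀ H₀ ∈ H, ∃ (A B : D) (f : A ⟶ H₀) (g : H₀ ⟶ B) (δ : B ⟶ A⟦(1 : ℤ)⟧),
    Triangle.mk f g δ ∈ (distTriang D) ∧ A ∈ X ∧ B ∈ Y) ∧
  STP2 D X Y ∧ STP3 D X Y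

namespace Stmt7Helpers

open ZeroObject

set_option linter.unusedSectionVars false

variable {D}

lemma shift_hom_zero {A B : D} (h : ∀ f : A ⟶ B⟦(-1 : ℤ)⟧, f = 0)
    (g : A⟦(1 : ℤ)⟧ ⟶ B) : g = 0 := by
  have h1 : (shiftShiftNeg A (1 : ℤ)).inv ≫ g⟦(-1 : ℤ)⟧' = 0 := h _
  have h2 : g⟦(-1 : ℤ)⟧' = 0 := by
    rw [← cancel_epi (shiftShiftNeg A (1 : ℤ)).inv, h1, comp_zero]
  apply (shiftFunctor D (-1 : ℤ)).map_injective
  rw [h2, Functor.map_zero]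

lemma unshift_hom_zero {A B : D} (h : ∀ g : A⟦(1 : ℤ)⟧ ⟶ B, g = 0)
    (f : A ⟶ B⟦(-1 : ℤ)⟧) : f = 0 := by
  have h1 : f⟦(1 : ℤ)⟧' ≫ (shiftNegShift B (1 : ℤ)).hom = 0 := h _
  have h2 : f⟦(1 : ℤ)⟧' = 0 := by
    rw [← cancel_mono (shiftNegShift B (1 : ℤ)).hom, h1, zero_comp]
  apply (shiftFunctor D (1 : ℤ)).map_injective
  rw [h2, Functor.map_zero]

lemma hom_out_zero₂ (T : Triangle D) (hT : T ∈ distTriang D) {N : D}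
    (h1 : ∀ f : T.obj₁ ⟶ N, f = 0) (h3 : ∀ f : T.obj₃ ⟶ N, f = 0)
    (f : T.obj₂ ⟶ N) : f = 0 := by
  obtain ⟨g, hg⟩ := Triangle.yoneda_exact₂ T hT f (h1 _)
  rw [hg, h3 g, comp_zero]

lemma hom_out_zero₃ (T : Triangle D) (hT : T ∈ distTriang D) {N : D}
    (h2 : ∀ f : T.obj₂ ⟶ N, f = 0) (h1 : ∀ f : T.obj₁⟦(1 : ℤ)⟧ ⟶ N, f = 0)
    (f : T.obj₃ ⟶ N) : f = 0 := by
  obtain ⟨g, hg⟩ := Triangle.yoneda_exact₃ T hT f (h2 _)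
  rw [hg, h1 g, comp_zero]

lemma hom_in_zero₂ (T : Triangle D) (hT : T ∈ distTriang D) {N : D}
    (h1 : ∀ f : N ⟶ T.obj₁, f = 0) (h3 : ∀ f : N ⟶ T.obj₃, f = 0)
    (f : N ⟶ T.obj₂) : f = 0 := by
  obtain ⟨g, hg⟩ := Triangle.coyoneda_exact₂ T hT f (h3 _)
  rw [hg, h1 g, zero_comp]

lemma hom_in_zero₁ (T : Triangle D) (hT : T ∈ distTriang D) {N : D}
    (h3 : ∀ g : N ⟶ T.obj₃⟦(-1 : ℤ)⟧, g = 0)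
    (f : N ⟶ T.obj₁) (hf : f ≫ T.mor₁ = 0) : f = 0 := by
  obtain ⟨g, hg⟩ := Triangle.coyoneda_exact₂ _ (inv_rot_of_distTriang T hT) f hf
  rw [hg, show g = 0 from h3 g]
  exact zero_comp

lemma yoneda_exact₁' (T : Triangle D) (hT : T ∈ distTriang D) {N : D} (f : T.obj₁ ⟶ N)
    (hf : T.mor₃ ≫ f⟦(1 : ℤ)⟧' = 0) : ∃ g : T.obj₂ ⟶ N, f = T.mor₁ ≫ g := by
  obtain ⟨g', hg'⟩ := Triangle.yoneda_exact₃ _ (rot_of_distTriang _ hT) (f⟦(1 : ℤ)⟧') hf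
  obtain ⟨g, rfl⟩ := (shiftFunctor D (1 : ℤ)).map_surjective g'
  refine ⟨-g, (shiftFunctor D (1 : ℤ)).map_injective ?_⟩
  rw [hg']
  simp [Triangle.rotate]
  erw [Functor.map_comp, Functor.map_neg, Preadditive.comp_neg, Preadditive.neg_comp]
  rfl

lemma isZero₃_of_mor₂_zero (T : Triangle D) (hT : T ∈ distTriang D) (h2 : T.mor₂ = 0)
    (h : ∀ g : T.obj₁⟦(1 : ℤ)⟧ ⟶ T.obj₃, g = 0) : IsZero T.obj₃ := by
  rw [IsZero.iff_id_eq_zero]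
  obtain ⟨g, hg⟩ := Triangle.yoneda_exact₃ T hT (𝟙 _) (by rw [Category.comp_id, h2])
  rw [hg, h g, comp_zero]

lemma isZero₁_of_mor₁_zero (T : Triangle D) (hT : T ∈ distTriang D) (h1 : T.mor₁ = 0)
    (h : ∀ g : T.obj₁⟦(1 : ℤ)⟧ ⟶ T.obj₃, g = 0) : IsZero T.obj₁ := by
  have hz : IsZero (T.obj₁⟦(1 : ℤ)⟧) := by
    rw [IsZero.iff_id_eq_zero]
    obtain ⟨g, hg⟩ := Triangle.coyoneda_exact₁ T hT (𝟙 _)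
      (by rw [h1, Functor.map_zero, comp_zero])
    rw [hg, h g, zero_comp]
  rw [IsZero.iff_id_eq_zero]
  apply (shiftFunctor D (1 : ℤ)).map_injective
  rw [CategoryTheory.Functor.map_id, CategoryTheory.Functor.map_zero]
  exact hz.eq_of_src _ _

section TS

variable {U V : Set D}

lemma ts_hom_zero (h : IsTStructure D U V) {A B : D} (hA : A ∈ U) (hB : B ∈ V)
    (f : A ⟶ B) : f = 0 := h.2.2.2.1 A hA B hB f

lemma ts_shift_hom_zero (h : IsTStructure D U V) {A B : D} (hA : A ∈ U) (hB : B ∈ V)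
    (f : A⟦(1 : ℤ)⟧ ⟶ B) : f = 0 := h.2.2.2.1 _ (h.2.2.2.2 A hA) B hB f

lemma ts_mem_left (h : IsTStructure D U V) {M : D}
    (hp : ∀ B ∈ V, ∀ f : M ⟶ B, f = 0) : M ∈ U := by
  obtain ⟨A, B, f, g, δ, hdist, hA, hB⟩ := h.2.2.1 M
  have hz : IsZero (Triangle.mk f g δ).obj₃ :=
    isZero₃_of_mor₂_zero _ hdist (hp B hB g) (fun q => ts_shift_hom_zero h hA hB q)
  haveI : IsIso (Triangle.mk f g δ).mor₁ := (Triangle.isZero₃_iff_isIso₁ _ hdist).1 hz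
  exact h.1 (@asIso _ _ _ _ (Triangle.mk f g δ).mor₁ this) hA

lemma ts_mem_right (h : IsTStructure D U V) {M : D}
    (hp : ∀ A ∈ U, ∀ f : A ⟶ M, f = 0) : M ∈ V := by
  obtain ⟨A, B, f, g, δ, hdist, hA, hB⟩ := h.2.2.1 M
  have hz : IsZero (Triangle.mk f g δ).obj₁ :=
    isZero₁_of_mor₁_zero _ hdist (hp A hA f) (fun q => ts_shift_hom_zero h hA hB q)
  haveI : IsIso (Triangle.mk f g δ).mor₂ := (Triangle.isZero₁_iff_isIso₂ _ hdist).1 hz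
  exact h.2.1 (asIso (Triangle.mk f g δ).mor₂).symm hB

lemma ts_zero_left (h : IsTStructure D U V) : (0 : D) ∈ U :=
  ts_mem_left h (fun B _ f => (isZero_zero D).eq_of_src f 0)

lemma ts_zero_right (h : IsTStructure D U V) : (0 : D) ∈ V :=
  ts_mem_right h (fun A _ f => (isZero_zero D).eq_of_tgt f 0)

end TS

section TP

variable {H X Y : Set D}

lemma tp_shift_hom_zero (hs : IsSTorsionPairIn D H X Y) {x y : D}
    (hx : x ∈ X) (hy : y ∈ Y) (g : x⟦(1 : ℤ)⟧ ⟶ y) : g = 0 :=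
  shift_hom_zero (fun f => hs.2.2.2.2.2.2 x hx y hy f) g

lemma tp_mem_left (hs : IsSTorsionPairIn D H X Y) {W : D} (hW : W ∈ H)
    (hp : ∀ y ∈ Y, ∀ f : W ⟶ y, f = 0) : W ∈ X := by
  obtain ⟨A, B, f, g, δ, hdist, hA, hB⟩ := hs.2.2.2.2.1 W hW
  have hz : IsZero (Triangle.mk f g δ).obj₃ :=
    isZero₃_of_mor₂_zero _ hdist (hp B hB g) (fun q => tp_shift_hom_zero hs hA hB q)
  haveI : IsIso (Triangle.mk f g δ).mor₁ := (Triangle.isZero₃_iff_isIso₁ _ hdist).1 hz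
  exact hs.2.2.1 (@asIso _ _ _ _ (Triangle.mk f g δ).mor₁ this) hA

lemma tp_mem_right (hs : IsSTorsionPairIn D H X Y) {W : D} (hW : W ∈ H)
    (hp : ∀ x ∈ X, ∀ f : x ⟶ W, f = 0) : W ∈ Y := by
  obtain ⟨A, B, f, g, δ, hdist, hA, hB⟩ := hs.2.2.2.2.1 W hW
  have hz : IsZero (Triangle.mk f g δ).obj₁ :=
    isZero₁_of_mor₁_zero _ hdist (hp A hA f) (fun q => tp_shift_hom_zero hs hA hB q)
  haveI : IsIso (Triangle.mk f g δ).mor₂ := (Triangle.isZero₁_iff_isIso₂ _ hdist).1 hz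
  exact hs.2.2.2.1 (asIso (Triangle.mk f g δ).mor₂).symm hB

end TP

lemma star_isoClosed (SX SY : Set D) : IsoClosed D (star D SX SY) := by
  rintro M M' e ⟨A, B, f, g, δ, hdist, hA, hB⟩
  refine ⟨A, B, f ≫ e.hom, e.inv ≫ g, δ, ?_, hA, hB⟩
  refine isomorphic_distinguished _ hdist _ ?_
  exact Triangle.isoMk _ _ (Iso.refl _) e.symm (Iso.refl _)
    (by show (f ≫ e.hom) ≫ e.inv = 𝟙 A ≫ f; simp)
    (by show (e.inv ≫ g) ≫ 𝟙 B = e.inv ≫ g; simp)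
    (by show δ ≫ (shiftFunctor D (1 : ℤ)).map (𝟙 A) = 𝟙 B ≫ δ; simp)

end Stmt7Helpers

open Stmt7Helpers ZeroObject

/-- the bijection of HRS-tilt type.
Let `(U₁, V₁)` and `(U₂, V₂)` be `t`-structures on `D` with `U₁ ⊆ U₂` and `H = U₂ ∩ V₁`.
Then `Φ(T, F) = (T ∩ V₁, U₂ ∩ F)` and `Ψ(X, Y) = (U₁ ∗ X, Y ∗ V₂)` are mutually inverse,
order-preserving bijections between the `t`-structures `(T, F)` on `D` with `U₁ ⊆ T ⊆ U₂`
and the `s`-torsion pairs in `H`. -/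
theorem stmt7 (U₁ V₁ U₂ V₂ : Set D)
    (h₁ : IsTStructure D U₁ V₁) (h₂ : IsTStructure D U₂ V₂) (h12 : U₁ ⊆ U₂) :
    -- `Φ` is well defined
    (∀ T F : Set D, IsTStructure D T F → U₁ ⊆ T → T ⊆ U₂ →
      IsSTorsionPairIn D (U₂ ∩ V₁) (T ∩ V₁) (U₂ ∩ F)) ∧
    -- `Ψ` is well defined
    (∀ X Y : Set D, IsSTorsionPairIn D (U₂ ∩ V₁) X Y →
      IsTStructure D (star D U₁ X) (star D Y V₂) ∧
        U₁ ⊆ star D U₁ X ∧ star D U₁ X ⊆ U₂) ∧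
    -- `Ψ ∘ Φ = id`
    (∀ T F : Set D, IsTStructure D T F → U₁ ⊆ T → T ⊆ U₂ →
      star D U₁ (T ∩ V₁) = T ∧ star D (U₂ ∩ F) V₂ = F) ∧
    -- `Φ ∘ Ψ = id`
    (∀ X Y : Set D, IsSTorsionPairIn D (U₂ ∩ V₁) X Y →
      (star D U₁ X) ∩ V₁ = X ∧ U₂ ∩ (star D Y V₂) = Y) ∧
    -- `Φ` is order-preserving
    (∀ T T' : Set D, T ⊆ T' → T ∩ V₁ ⊆ T' ∩ V₁) ∧
    -- `Ψ` is order-preserving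
    (∀ X X' : Set D, X ⊆ X' → star D U₁ X ⊆ star D U₁ X') := by
  have part1 : ∀ T F : Set D, IsTStructure D T F → U₁ ⊆ T → T ⊆ U₂ →
      IsSTorsionPairIn D (U₂ ∩ V₁) (T ∩ V₁) (U₂ ∩ F) := by
    intro T F hTF hUT hTU
    have hFV₁ : F ⊆ V₁ := fun B hB =>
      ts_mem_right h₁ (fun A hA f => ts_hom_zero hTF (hUT hA) hB f)
    refine ⟨fun W hW => ⟨hTU hW.1, hW.2⟩, fun W hW => ⟨hW.1, hFV₁ hW.2⟩,
      fun P Q e hP => ⟨hTF.1 e hP.1, h₁.2.1 e hP.2⟩,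
      fun P Q e hP => ⟨h₂.1 e hP.1, hTF.2.1 e hP.2⟩, ?_, ?_, ?_⟩
    · rintro H₀ ⟨hH₀U₂, hH₀V₁⟩
      obtain ⟨A, B, f, g, δ, hdist, hA, hB⟩ := hTF.2.2.1 H₀
      refine ⟨A, B, f, g, δ, hdist, ⟨hA, ?_⟩, ⟨?_, hB⟩⟩
      · apply ts_mem_right h₁
        intro u hu φ
        exact hom_in_zero₁ _ hdist
          (fun q => unshift_hom_zero
            (fun w => ts_hom_zero hTF (hTF.2.2.2.2 u (hUT hu)) hB w) q)
          φ (ts_hom_zero h₁ hu hH₀V₁ (φ ≫ f))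
      · apply ts_mem_left h₂
        intro v hv φ
        exact hom_out_zero₃ _ hdist (fun q => ts_hom_zero h₂ hH₀U₂ hv q)
          (fun q => ts_hom_zero h₂ (hTU (hTF.2.2.2.2 A hA)) hv q) φ
    · intro P hP Q hQ φ
      exact ts_hom_zero hTF hP.1 hQ.2 φ
    · intro P hP Q hQ φ
      exact unshift_hom_zero (fun w => ts_hom_zero hTF (hTF.2.2.2.2 P hP.1) hQ.2 w) φ
  have part3 : ∀ T F : Set D, IsTStructure D T F → U₁ ⊆ T → T ⊆ U₂ →
      star D U₁ (T ∩ V₁) = T ∧ star D (U₂ ∩ F) V₂ = F := by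
    intro T F hTF hUT hTU
    have hVF : V₂ ⊆ F := fun v hv =>
      ts_mem_right hTF (fun A hA f => ts_hom_zero h₂ (hTU hA) hv f)
    constructor
    · apply Set.Subset.antisymm
      · rintro M ⟨A, B, f, g, δ, hdist, hA, hB⟩
        apply ts_mem_left hTF
        intro Q hQ φ
        exact hom_out_zero₂ _ hdist (fun q => ts_hom_zero hTF (hUT hA) hQ q)
          (fun q => ts_hom_zero hTF hB.1 hQ q) φ
      · intro M hM
        obtain ⟨A, B, f, g, δ, hdist, hA, hB⟩ := h₁.2.2.1 M
        have hBT : B ∈ T := ts_mem_left hTF (fun Q hQ φ =>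
          hom_out_zero₃ _ hdist (fun q => ts_hom_zero hTF hM hQ q)
            (fun q => ts_hom_zero hTF (hTF.2.2.2.2 A (hUT hA)) hQ q) φ)
        exact ⟨A, B, f, g, δ, hdist, hA, ⟨hBT, hB⟩⟩
    · apply Set.Subset.antisymm
      · rintro M ⟨A, B, f, g, δ, hdist, hA, hB⟩
        apply ts_mem_right hTF
        intro P hP φ
        exact hom_in_zero₂ _ hdist (fun q => ts_hom_zero hTF hP hA.2 q)
          (fun q => ts_hom_zero hTF hP (hVF hB) q) φ
      · intro N hN
        obtain ⟨A, B, f, g, δ, hdist, hA, hB⟩ := h₂.2.2.1 N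
        have hAF : A ∈ F := ts_mem_right hTF (fun P hP φ =>
          hom_in_zero₁ _ hdist
            (fun q => unshift_hom_zero
              (fun w => ts_hom_zero h₂ (hTU (hTF.2.2.2.2 P hP)) hB w) q)
            φ (ts_hom_zero hTF hP hN (φ ≫ f)))
        exact ⟨A, B, f, g, δ, hdist, ⟨hA, hAF⟩, hB⟩
  have part4 : ∀ X Y : Set D, IsSTorsionPairIn D (U₂ ∩ V₁) X Y →
      (star D U₁ X) ∩ V₁ = X ∧ U₂ ∩ (star D Y V₂) = Y := by
    intro X Y hs
    constructor
    · apply Set.Subset.antisymm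
      · rintro M ⟨⟨A, B, f, g, δ, hdist, hA, hB⟩, hMV₁⟩
        have hz : IsZero (Triangle.mk f g δ).obj₁ :=
          isZero₁_of_mor₁_zero _ hdist (ts_hom_zero h₁ hA hMV₁ f)
            (fun q => ts_hom_zero h₁ (h₁.2.2.2.2 A hA) (hs.1 hB).2 q)
        haveI : IsIso (Triangle.mk f g δ).mor₂ :=
          (Triangle.isZero₁_iff_isIso₂ _ hdist).1 hz
        exact hs.2.2.1 (asIso (Triangle.mk f g δ).mor₂).symm hB
      · intro x hx
        exact ⟨⟨0, x, 0, 𝟙 x, 0, contractible_distinguished₁ x, ts_zero_left h₁, hx⟩,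
          (hs.1 hx).2⟩
    · apply Set.Subset.antisymm
      · rintro M ⟨hMU₂, ⟨A, B, f, g, δ, hdist, hA, hB⟩⟩
        have hz : IsZero (Triangle.mk f g δ).obj₃ :=
          isZero₃_of_mor₂_zero _ hdist (ts_hom_zero h₂ hMU₂ hB g)
            (fun q => ts_hom_zero h₂ (h₂.2.2.2.2 A (hs.2.1 hA).1) hB q)
        haveI : IsIso (Triangle.mk f g δ).mor₁ :=
          (Triangle.isZero₃_iff_isIso₁ _ hdist).1 hz
        exact hs.2.2.2.1 (@asIso _ _ _ _ (Triangle.mk f g δ).mor₁ this) hA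
      · intro y hy
        exact ⟨(hs.2.1 hy).1,
          ⟨y, 0, 𝟙 y, 0, 0, contractible_distinguished y, hy, ts_zero_right h₂⟩⟩
  have part2 : ∀ X Y : Set D, IsSTorsionPairIn D (U₂ ∩ V₁) X Y →
      IsTStructure D (star D U₁ X) (star D Y V₂) ∧
        U₁ ⊆ star D U₁ X ∧ star D U₁ X ⊆ U₂ := by
    intro X Y hs
    have hXU₂ : ∀ {x : D}, x ∈ X → x ∈ U₂ := fun hx => (hs.1 hx).1
    have hXV₁ : ∀ {x : D}, x ∈ X → x ∈ V₁ := fun hx => (hs.1 hx).2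
    have hYU₂ : ∀ {y : D}, y ∈ Y → y ∈ U₂ := fun hy => (hs.2.1 hy).1
    have hYV₁ : ∀ {y : D}, y ∈ Y → y ∈ V₁ := fun hy => (hs.2.1 hy).2
    have hstp2 := hs.2.2.2.2.2.1
    have h0X : (0 : D) ∈ X := tp_mem_left hs ⟨ts_zero_left h₂, ts_zero_right h₁⟩
      (fun y _ f => (isZero_zero D).eq_of_src f 0)
    have h0Y : (0 : D) ∈ Y := tp_mem_right hs ⟨ts_zero_left h₂, ts_zero_right h₁⟩
      (fun x _ f => (isZero_zero D).eq_of_tgt f 0)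
    have hU₁T : U₁ ⊆ star D U₁ X := fun u hu =>
      ⟨u, 0, 𝟙 u, 0, 0, contractible_distinguished u, hu, h0X⟩
    -- vanishing out of star U₁ X
    have hTY : ∀ M ∈ star D U₁ X, ∀ y ∈ Y, ∀ f : M ⟶ y, f = 0 := by
      rintro M ⟨A, B, f, g, δ, hdist, hA, hB⟩ y hy φ
      exact hom_out_zero₂ _ hdist (fun q => ts_hom_zero h₁ hA (hYV₁ hy) q)
        (fun q => hstp2 B hB y hy q) φ
    have hTV : ∀ M ∈ star D U₁ X, ∀ v ∈ V₂, ∀ f : M ⟶ v, f = 0 := by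
      rintro M ⟨A, B, f, g, δ, hdist, hA, hB⟩ v hv φ
      exact hom_out_zero₂ _ hdist (fun q => ts_hom_zero h₂ (h12 hA) hv q)
        (fun q => ts_hom_zero h₂ (hXU₂ hB) hv q) φ
    have hTU₂ : star D U₁ X ⊆ U₂ := fun M hM =>
      ts_mem_left h₂ (fun v hv φ => hTV M hM v hv φ)
    -- perpendicularity criterion for membership in star U₁ X
    have critT : ∀ M : D, (∀ y ∈ Y, ∀ f : M ⟶ y, f = 0) →
        (∀ v ∈ V₂, ∀ f : M ⟶ v, f = 0) → M ∈ star D U₁ X := by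
      intro M hMY hMV
      obtain ⟨A, B, f, g, δ, hdist, hA, hB⟩ := h₁.2.2.1 M
      have hBU₂ : B ∈ U₂ := ts_mem_left h₂ (fun v hv φ =>
        hom_out_zero₃ _ hdist (fun q => hMV v hv q)
          (fun q => ts_hom_zero h₂ (h12 (h₁.2.2.2.2 A hA)) hv q) φ)
      have hBX : B ∈ X := tp_mem_left hs ⟨hBU₂, hB⟩ (fun y hy φ =>
        hom_out_zero₃ _ hdist (fun q => hMY y hy q)
          (fun q => ts_hom_zero h₁ (h₁.2.2.2.2 A hA) (hYV₁ hy) q) φ)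
      exact ⟨A, B, f, g, δ, hdist, hA, hBX⟩
    -- perpendicularity criterion for membership in star Y V₂
    have critF : ∀ N : D, (∀ u ∈ U₁, ∀ f : u ⟶ N, f = 0) →
        (∀ x ∈ X, ∀ f : x ⟶ N, f = 0) → N ∈ star D Y V₂ := by
      intro N hNU hNX
      obtain ⟨A, B, f, g, δ, hdist, hA, hB⟩ := h₂.2.2.1 N
      have hAV₁ : A ∈ V₁ := ts_mem_right h₁ (fun u hu φ =>
        hom_in_zero₁ _ hdist
          (fun q => unshift_hom_zero
            (fun w => ts_hom_zero h₂ (h12 (h₁.2.2.2.2 u hu)) hB w) q)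
          φ (hNU u hu (φ ≫ f)))
      have hAY : A ∈ Y := tp_mem_right hs ⟨hA, hAV₁⟩ (fun x hx φ =>
        hom_in_zero₁ _ hdist
          (fun q => unshift_hom_zero
            (fun w => ts_hom_zero h₂ (h₂.2.2.2.2 x (hXU₂ hx)) hB w) q)
          φ (hNX x hx (φ ≫ f)))
      exact ⟨A, B, f, g, δ, hdist, hAY, hB⟩
    -- STP2 for the star pair
    have hstp2' : STP2 D (star D U₁ X) (star D Y V₂) := by
      rintro M hM N ⟨A, B, f, g, δ, hdist, hA, hB⟩ φ
      exact hom_in_zero₂ _ hdist (fun q => hTY M hM A hA q) (fun q => hTV M hM B hB q) φ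
    -- closure of star U₁ X under the shift
    have hshift : ∀ M ∈ star D U₁ X, M⟦(1 : ℤ)⟧ ∈ star D U₁ X := by
      rintro M ⟨A, B, f, g, δ, hdist, hA, hB⟩
      have hrot := rot_of_distTriang _ (rot_of_distTriang _ hdist)
      refine critT _ ?_ ?_
      · intro y hy φ
        exact hom_out_zero₃ ((Triangle.mk f g δ).rotate.rotate) hrot
          (fun q => ts_hom_zero h₁ (h₁.2.2.2.2 A hA) (hYV₁ hy) q)
          (fun q => tp_shift_hom_zero hs hB hy q) φ
      · intro v hv φ
        exact hom_out_zero₃ ((Triangle.mk f g δ).rotate.rotate) hrot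
          (fun q => ts_hom_zero h₂ (h₂.2.2.2.2 A (h12 hA)) hv q)
          (fun q => ts_hom_zero h₂ (h₂.2.2.2.2 B (hXU₂ hB)) hv q) φ
    -- STP1 for the star pair: the main construction
    have hstp1 : STP1 D (star D U₁ X) (star D Y V₂) := by
      intro M
      obtain ⟨A₂, B₂, a, b, e, dt1, hA₂, hB₂⟩ := h₂.2.2.1 M
      obtain ⟨A₁, C, fA, gC, hC, dt2, hA₁, hCV₁⟩ := h₁.2.2.1 A₂
      have hCU₂ : C ∈ U₂ := ts_mem_left h₂ (fun v hv φ =>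
        hom_out_zero₃ _ dt2 (fun q => ts_hom_zero h₂ hA₂ hv q)
          (fun q => ts_hom_zero h₂ (h12 (h₁.2.2.2.2 A₁ hA₁)) hv q) φ)
      obtain ⟨x, y, ix, px, dx, dt3, hx, hy⟩ := hs.2.2.2.2.1 C ⟨hCU₂, hCV₁⟩
      obtain ⟨T, t', ρ, dt4⟩ := distinguished_cocone_triangle₁ (gC ≫ px)
      -- master chase: Hom(T, n) = 0 whenever Hom(A₁, n) = 0 and Hom(x, n) = 0
      have chase : ∀ (n : D), (∀ q : A₁ ⟶ n, q = 0) → (∀ q : x ⟶ n, q = 0) →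
          ∀ φ : T ⟶ n, φ = 0 := by
        intro n hA₁n hxn φ
        obtain ⟨β, hβ0⟩ := Triangle.coyoneda_exact₂ _ dt3 (t' ≫ gC) (by
          erw [Category.assoc]
          exact comp_distTriang_mor_zero₁₂ _ dt4)
        have hβ : t' ≫ gC = β ≫ ix := hβ0
        have hζ : ρ ≫ φ⟦(1 : ℤ)⟧' = 0 := by
          have hz23 : (gC ≫ px) ≫ ρ = 0 := comp_distTriang_mor_zero₂₃ _ dt4
          have hgpρ : gC ≫ px ≫ ρ ≫ φ⟦(1 : ℤ)⟧' = 0 := by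
            rw [show gC ≫ px ≫ ρ ≫ φ⟦(1 : ℤ)⟧' = ((gC ≫ px) ≫ ρ) ≫ φ⟦(1 : ℤ)⟧' by
              simp only [Category.assoc], hz23, zero_comp]
          obtain ⟨q', hq'⟩ := Triangle.yoneda_exact₃ _ dt2 (px ≫ ρ ≫ φ⟦(1 : ℤ)⟧') hgpρ
          obtain ⟨q, rfl⟩ := (shiftFunctor D (1 : ℤ)).map_surjective q'
          erw [hA₁n q, Functor.map_zero, comp_zero] at hq'
          obtain ⟨r', hr'⟩ := Triangle.yoneda_exact₃ _ dt3 (ρ ≫ φ⟦(1 : ℤ)⟧') hq'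
          obtain ⟨r, rfl⟩ := (shiftFunctor D (1 : ℤ)).map_surjective r'
          erw [hxn r, Functor.map_zero, comp_zero] at hr'
          exact hr'
        obtain ⟨χ, hχ0⟩ := yoneda_exact₁' _ dt4 φ hζ
        have hχ : φ = t' ≫ χ := hχ0
        obtain ⟨χ₁, hχ₁0⟩ := Triangle.yoneda_exact₂ _ dt2 χ (hA₁n _)
        have hχ₁ : χ = gC ≫ χ₁ := hχ₁0
        erw [hχ, hχ₁, ← Category.assoc, hβ, Category.assoc, hxn (ix ≫ χ₁), comp_zero]
      have hTT : T ∈ star D U₁ X := critT T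
        (fun y' hy' φ => chase y' (fun q => ts_hom_zero h₁ hA₁ (hYV₁ hy') q)
          (fun q => hstp2 x hx y' hy' q) φ)
        (fun v hv φ => chase v (fun q => ts_hom_zero h₂ (h12 hA₁) hv q)
          (fun q => ts_hom_zero h₂ (hXU₂ hx) hv q) φ)
      obtain ⟨F, b', e', dt5⟩ := distinguished_cocone_triangle (t' ≫ a)
      -- chase for maps into F
      have chase2 : ∀ (W : D), (∀ q : W ⟶ B₂, q = 0) → (∀ q : W ⟶ y, q = 0) →
          ∀ φ : W ⟶ F, φ = 0 := by
        intro W hWB hWy φ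
        have h0 : ((φ ≫ e') ≫ t'⟦(1 : ℤ)⟧') ≫ a⟦(1 : ℤ)⟧' = 0 := by
          have hz : e' ≫ (t' ≫ a)⟦(1 : ℤ)⟧' = 0 := comp_distTriang_mor_zero₃₁ _ dt5
          rw [Category.assoc, Category.assoc, ← Functor.map_comp, hz, comp_zero]
        have hk : (φ ≫ e') ≫ t'⟦(1 : ℤ)⟧' = 0 := by
          obtain ⟨κ, hκ⟩ := Triangle.coyoneda_exact₂ _
            (rot_of_distTriang _ (rot_of_distTriang _ dt1)) ((φ ≫ e') ≫ t'⟦(1 : ℤ)⟧')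
            (by erw [Preadditive.comp_neg, h0, neg_zero])
          have hκ' : (φ ≫ e') ≫ t'⟦(1 : ℤ)⟧' = κ ≫ e := hκ
          erw [hκ', hWB κ, zero_comp]
        have hω : φ ≫ e' = 0 := by
          obtain ⟨lam, hlam⟩ := Triangle.coyoneda_exact₃ _ (rot_of_distTriang _ dt4)
            (φ ≫ e') (by erw [Preadditive.comp_neg, hk, neg_zero])
          have hlam' : φ ≫ e' = lam ≫ ρ := hlam
          erw [hlam', hWy lam, zero_comp]
        obtain ⟨μ', hμ'0⟩ := Triangle.coyoneda_exact₃ _ dt5 φ hω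
        have hμ' : φ = μ' ≫ b' := hμ'0
        obtain ⟨μ₂, hμ₂0⟩ := Triangle.coyoneda_exact₂ _ dt1 μ' (hWB _)
        have hμ₂ : μ' = μ₂ ≫ a := hμ₂0
        obtain ⟨ν, hν0⟩ := Triangle.yoneda_exact₂ _ dt4 (a ≫ b') (by
          have hz12 : (t' ≫ a) ≫ b' = 0 := comp_distTriang_mor_zero₁₂ _ dt5
          erw [← Category.assoc]
          exact hz12)
        have hν : a ≫ b' = (gC ≫ px) ≫ ν := hν0
        erw [hμ', hμ₂, Category.assoc, hν, ← Category.assoc, hWy (μ₂ ≫ (gC ≫ px)),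
          zero_comp]
      have hFF : F ∈ star D Y V₂ := critF F
        (fun u hu φ => chase2 u (fun q => ts_hom_zero h₂ (h12 hu) hB₂ q)
          (fun q => ts_hom_zero h₁ hu (hYV₁ hy) q) φ)
        (fun x' hx' φ => chase2 x' (fun q => ts_hom_zero h₂ (hXU₂ hx') hB₂ q)
          (fun q => hstp2 x' hx' y hy q) φ)
      exact ⟨T, F, t' ≫ a, b', e', dt5, hTT, hFF⟩
    exact ⟨⟨star_isoClosed U₁ X, star_isoClosed Y V₂, hstp1, hstp2', hshift⟩, hU₁T, hTU₂⟩
  refine ⟨part1, part2, part3, part4, fun T T' hsub W hW => ⟨hsub hW.1, hW.2⟩, ?_⟩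
  rintro X X' hsub M ⟨A, B, f, g, δ, hdist, hA, hB⟩
  exact ⟨A, B, f, g, δ, hdist, hA, hsub hB⟩
end

section
/- Let k be a field, let Λ be a finite-dimensional k-algebra, and let (T,F) be a torsion pair in mod Λ. Then the following are equivalent: (1) Ext¹_Λ(T,F) = 0 for all T ∈ T and F ∈ F; (2) T and F are Serre subcategories of mod Λ, i.e. T is closed under submodules and F is closed under quotient modules (both T and F are automatically closed under quotients and submodules respectively, being torsion and torsion-free classes). -/
open CategoryTheory

universe u

section Aux

variable {R : Type u} [Ring R]

/-- Torsion classes are closed under surjective images. -/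
lemma auxT_surj (T F : Set (ModuleCat.{u} R))
    (hTiso : ∀ ⦃M N : ModuleCat.{u} R⦄, (M ≅ N) → M ∈ T → N ∈ T)
    (hHom : ∀ M ∈ T, ∀ N ∈ F, ∀ f : M →ₗ[R] N, f = 0)
    (hTP : ∀ M : ModuleCat.{u} R, Module.Finite R M →
      ∃ N : Submodule R M, ModuleCat.of R N ∈ T ∧ ModuleCat.of R (M ⧸ N) ∈ F)
    (hTfin : ∀ M ∈ T, Module.Finite R M)
    (M : ModuleCat.{u} R) (hM : M ∈ T) (Q : ModuleCat.{u} R)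
    (φ : M →ₗ[R] Q) (hφ : Function.Surjective φ) : Q ∈ T := by
  have hMfin : Module.Finite R M := hTfin M hM
  have hQfin : Module.Finite R Q := Module.Finite.of_surjective φ hφ
  obtain ⟨K, hK, hQK⟩ := hTP Q hQfin
  have hz : K.mkQ ∘ₗ φ = 0 := hHom M hM _ hQK _
  have hKtop : K = ⊤ := by
    rw [eq_top_iff]
    intro q _
    obtain ⟨m, rfl⟩ := hφ q
    have h0 := LinearMap.congr_fun hz m
    rw [LinearMap.comp_apply, LinearMap.zero_apply, Submodule.mkQ_apply,
      Submodule.Quotient.mk_eq_zero] at h0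
    exact h0
  exact hTiso (LinearEquiv.toModuleIso (LinearEquiv.ofTop K hKtop)) hK

/-- Torsion-free classes are closed under (finite) submodules / injective preimages. -/
lemma auxF_inj (T F : Set (ModuleCat.{u} R))
    (hFiso : ∀ ⦃M N : ModuleCat.{u} R⦄, (M ≅ N) → M ∈ F → N ∈ F)
    (hHom : ∀ M ∈ T, ∀ N ∈ F, ∀ f : M →ₗ[R] N, f = 0)
    (hTP : ∀ M : ModuleCat.{u} R, Module.Finite R M →
      ∃ N : Submodule R M, ModuleCat.of R N ∈ T ∧ ModuleCat.of R (M ⧸ N) ∈ F)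
    (M : ModuleCat.{u} R) (hM : M ∈ F) (S : ModuleCat.{u} R) (hSfin : Module.Finite R S)
    (ψ : S →ₗ[R] M) (hψ : Function.Injective ψ) : S ∈ F := by
  obtain ⟨K, hK, hSK⟩ := hTP S hSfin
  have hz : ψ ∘ₗ K.subtype = 0 := hHom _ hK M hM _
  have hKbot : K = ⊥ := by
    rw [eq_bot_iff]
    intro x hx
    have h0 := LinearMap.congr_fun hz ⟨x, hx⟩
    rw [LinearMap.comp_apply, LinearMap.zero_apply, Submodule.subtype_apply] at h0
    have hx0 : x = 0 := hψ (h0.trans (map_zero ψ).symm)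
    simp [hx0]
  exact hFiso (LinearEquiv.toModuleIso (Submodule.quotEquivOfEqBot K hKbot)) hSK

end Aux

/-- Proposition: `Ext¹`-vanishing and Serre subcategories.
Let `k` be a field, `Λ` a finite-dimensional `k`-algebra, and `(T, F)` a torsion pair in
`mod Λ`, the category of finite-dimensional (equivalently, finitely generated) right
`Λ`-modules, i.e. left `Λᵐᵒᵖ`-modules.  Then the following are equivalent:
(1) `Ext¹_Λ(T, F) = 0`, i.e. every short exact sequence `0 → Y → E → X → 0` with `X ∈ T`
and `Y ∈ F` splits; (2) `T` is closed under submodules and `F` is closed under quotient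
modules (so that `T` and `F` are Serre subcategories). -/
theorem stmt16 (k : Type u) [Field k] (Λ : Type u) [Ring Λ] [Algebra k Λ]
    [FiniteDimensional k Λ]
    (T F : Set (ModuleCat.{u} Λᵐᵒᵖ))
    -- all modules in `T` and `F` are objects of `mod Λ`
    (hTfin : ∀ M ∈ T, Module.Finite Λᵐᵒᵖ M)
    (hFfin : ∀ M ∈ F, Module.Finite Λᵐᵒᵖ M)
    -- `T` and `F` are closed under isomorphisms
    (hTiso : ∀ ⦃M N : ModuleCat.{u} Λᵐᵒᵖ⦄, (M ≅ N) → M ∈ T → N ∈ T)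
    (hFiso : ∀ ⦃M N : ModuleCat.{u} Λᵐᵒᵖ⦄, (M ≅ N) → M ∈ F → N ∈ F)
    -- `Hom(T, F) = 0`
    (hHom : ∀ M ∈ T, ∀ N ∈ F, ∀ f : M →ₗ[Λᵐᵒᵖ] N, f = 0)
    -- every finite-dimensional module has a submodule in `T` with quotient in `F`
    (hTP : ∀ M : ModuleCat.{u} Λᵐᵒᵖ, Module.Finite Λᵐᵒᵖ M →
      ∃ N : Submodule Λᵐᵒᵖ M, ModuleCat.of Λᵐᵒᵖ N ∈ T ∧ ModuleCat.of Λᵐᵒᵖ (M ⧸ N) ∈ F) :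
    -- (1): every extension of a module of `T` by a module of `F` splits, i.e.
    -- `Ext¹_Λ(T, F) = 0`
    (∀ X ∈ T, ∀ Y ∈ F, ∀ (E : ModuleCat.{u} Λᵐᵒᵖ)
        (f : Y →ₗ[Λᵐᵒᵖ] E) (g : E →ₗ[Λᵐᵒᵖ] X),
        Function.Injective f → Function.Surjective g → Function.Exact f g →
        ∃ s : X →ₗ[Λᵐᵒᵖ] E, g ∘ₗ s = LinearMap.id)
    ↔
    -- (2): `T` is closed under submodules and `F` is closed under quotient modules
    ((∀ M ∈ T, ∀ N : Submodule Λᵐᵒᵖ M, ModuleCat.of Λᵐᵒᵖ N ∈ T) ∧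
     (∀ M ∈ F, ∀ N : Submodule Λᵐᵒᵖ M, ModuleCat.of Λᵐᵒᵖ (M ⧸ N) ∈ F)) := by
  have hnk : IsNoetherian k Λᵐᵒᵖ :=
    isNoetherian_of_linearEquiv (MulOpposite.opLinearEquiv k)
  have hnoeth : IsNoetherianRing Λᵐᵒᵖ := isNoetherianRing_iff.mpr (isNoetherian_of_tower k hnk)
  have hsubfin : ∀ (M : ModuleCat.{u} Λᵐᵒᵖ), Module.Finite Λᵐᵒᵖ M →
      ∀ N : Submodule Λᵐᵒᵖ M, Module.Finite Λᵐᵒᵖ N := by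
    intro M hMfin N
    have : IsNoetherian Λᵐᵒᵖ M := isNoetherian_of_isNoetherianRing_of_finite Λᵐᵒᵖ M
    infer_instance
  constructor
  · -- (1) → (2)
    intro hsplit
    constructor
    · -- T closed under submodules
      intro M hM N
      have hMfin := hTfin M hM
      have hNfin : Module.Finite Λᵐᵒᵖ N := hsubfin M hMfin N
      obtain ⟨N', hN', hFN'⟩ := hTP (ModuleCat.of Λᵐᵒᵖ N) hNfin
      -- short exact sequence 0 → N/N' → M/N'' → M/N → 0
      set N'' : Submodule Λᵐᵒᵖ M := N'.map N.subtype with hN''def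
      have hle : N' ≤ N''.comap N.subtype := fun x hx => Submodule.mem_map_of_mem hx
      set f : (N ⧸ N') →ₗ[Λᵐᵒᵖ] (M ⧸ N'') := Submodule.mapQ N' N'' N.subtype hle with hfdef
      have hle2 : N'' ≤ N.comap LinearMap.id := by
        rintro x ⟨y, _, rfl⟩; exact y.2
      set g : (M ⧸ N'') →ₗ[Λᵐᵒᵖ] ((M : Type u) ⧸ N) :=
        Submodule.mapQ N'' N LinearMap.id hle2 with hgdef
      have hfinj : Function.Injective f := by
        rw [← LinearMap.ker_eq_bot, eq_bot_iff]
        intro x hx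
        obtain ⟨y, rfl⟩ := Submodule.Quotient.mk_surjective N' x
        rw [LinearMap.mem_ker, hfdef, Submodule.mapQ_apply,
          Submodule.Quotient.mk_eq_zero] at hx
        obtain ⟨z, hz, hzz⟩ := hx
        have : z = y := Subtype.ext hzz
        subst this
        simpa [Submodule.Quotient.mk_eq_zero] using hz
      have hgsurj : Function.Surjective g := by
        intro q
        obtain ⟨m, rfl⟩ := Submodule.Quotient.mk_surjective N q
        exact ⟨Submodule.Quotient.mk m, by rw [hgdef, Submodule.mapQ_apply]; rfl⟩
      have hexact : Function.Exact f g := by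
        intro y
        constructor
        · intro h0
          obtain ⟨m, rfl⟩ := Submodule.Quotient.mk_surjective N'' y
          rw [hgdef, Submodule.mapQ_apply, Submodule.Quotient.mk_eq_zero] at h0
          exact ⟨Submodule.Quotient.mk ⟨m, h0⟩, by rw [hfdef, Submodule.mapQ_apply]; rfl⟩
        · rintro ⟨z, hz⟩
          rw [← hz]
          obtain ⟨n, rfl⟩ := Submodule.Quotient.mk_surjective N' z
          rw [hfdef, Submodule.mapQ_apply, hgdef, Submodule.mapQ_apply,
            Submodule.Quotient.mk_eq_zero]
          exact n.2
      have hXT : ModuleCat.of Λᵐᵒᵖ ((M : Type u) ⧸ N) ∈ T :=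
        auxT_surj T F hTiso hHom hTP hTfin M hM _ N.mkQ (Submodule.mkQ_surjective N)
      obtain ⟨s, hs⟩ := hsplit _ hXT _ hFN' (ModuleCat.of Λᵐᵒᵖ ((M : Type u) ⧸ N''))
        f g hfinj hgsurj hexact
      let s' : ((M : Type u) ⧸ N) →ₗ[Λᵐᵒᵖ] ((M : Type u) ⧸ N'') := s
      have hs' : g ∘ₗ s' = LinearMap.id := hs
      clear hs
      -- build the surjection π : M → N/N'
      have hrange : LinearMap.range f = LinearMap.ker g := (LinearMap.exact_iff.mp hexact).symm
      set p : ((M : Type u) ⧸ N'') →ₗ[Λᵐᵒᵖ] ((M : Type u) ⧸ N'') := LinearMap.id - s' ∘ₗ g with hpdef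
      have hpmem : ∀ x, p x ∈ LinearMap.range f := by
        intro x
        rw [hrange, LinearMap.mem_ker]
        have hgs : g (s' (g x)) = g x := LinearMap.congr_fun hs' (g x)
        rw [hpdef]
        show g (x - s' (g x)) = 0
        rw [map_sub, hgs, sub_self]
      set π : (M : Type u) →ₗ[Λᵐᵒᵖ] ((N : Type u) ⧸ N') :=
        ((LinearEquiv.ofInjective f hfinj).symm.toLinearMap ∘ₗ
          LinearMap.codRestrict (LinearMap.range f) p hpmem) ∘ₗ N''.mkQ with hπdef
      have hπsurj : Function.Surjective π := by
        intro y
        obtain ⟨m, hm⟩ := Submodule.Quotient.mk_surjective N'' (f y)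
        refine ⟨m, ?_⟩
        have hgf : g (f y) = 0 := by
          rw [← LinearMap.mem_ker, ← hrange]; exact LinearMap.mem_range_self f y
        have hpf : p (f y) = f y := by
          rw [hpdef]
          show f y - s' (g (f y)) = f y
          rw [hgf, map_zero, sub_zero]
        have : (LinearMap.codRestrict (LinearMap.range f) p hpmem) (f y)
            = LinearEquiv.ofInjective f hfinj y := by
          apply Subtype.ext
          rw [LinearMap.codRestrict_apply, hpf]
          rfl
        simp only [hπdef, LinearMap.comp_apply, Submodule.mkQ_apply, hm, this,
          LinearEquiv.coe_coe, LinearEquiv.symm_apply_apply]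
      have hπ0 : π = 0 := hHom M hM _ hFN' π
      have hN'top : N' = ⊤ := by
        rw [eq_top_iff]
        intro x _
        obtain ⟨m, hm⟩ := hπsurj (Submodule.Quotient.mk x)
        rw [hπ0, LinearMap.zero_apply] at hm
        rw [← Submodule.Quotient.mk_eq_zero]
        exact hm.symm
      exact hTiso (LinearEquiv.toModuleIso (LinearEquiv.ofTop N' hN'top)) hN'
    · -- F closed under quotients
      intro M hM N
      have hMfin := hFfin M hM
      have hQfin : Module.Finite Λᵐᵒᵖ ((M : Type u) ⧸ N) :=
        Module.Finite.of_surjective N.mkQ (Submodule.mkQ_surjective N)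
      obtain ⟨K, hK, hQK⟩ := hTP (ModuleCat.of Λᵐᵒᵖ ((M : Type u) ⧸ N)) hQfin
      set P : Submodule Λᵐᵒᵖ M := K.comap N.mkQ with hPdef
      have hNP : N ≤ P := by
        intro n hn
        show N.mkQ n ∈ K
        rw [Submodule.mkQ_apply, Submodule.Quotient.mk_eq_zero N |>.mpr hn]
        exact K.zero_mem
      have hYF : ModuleCat.of Λᵐᵒᵖ N ∈ F :=
        auxF_inj T F hFiso hHom hTP M hM _ (hsubfin M hMfin N) N.subtype
          (Submodule.injective_subtype N)
      set f : (N : Type u) →ₗ[Λᵐᵒᵖ] (P : Type u) := Submodule.inclusion hNP with hfdef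
      set g : (P : Type u) →ₗ[Λᵐᵒᵖ] (K : Type u) :=
        LinearMap.codRestrict K (N.mkQ ∘ₗ P.subtype) (fun c => c.2) with hgdef
      have hfinj : Function.Injective f := Submodule.inclusion_injective hNP
      have hgsurj : Function.Surjective g := by
        rintro ⟨q, hq⟩
        obtain ⟨m, rfl⟩ := Submodule.Quotient.mk_surjective N q
        refine ⟨⟨m, hq⟩, ?_⟩
        apply Subtype.ext
        rfl
      have hexact : Function.Exact f g := by
        rintro ⟨m, hm⟩
        constructor
        · intro h0
          have : N.mkQ m = 0 := Subtype.ext_iff.mp h0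
          rw [Submodule.mkQ_apply, Submodule.Quotient.mk_eq_zero] at this
          exact ⟨⟨m, this⟩, rfl⟩
        · rintro ⟨z, hz⟩
          rw [← hz]
          apply Subtype.ext
          show N.mkQ (z : M) = 0
          rw [Submodule.mkQ_apply, Submodule.Quotient.mk_eq_zero]
          exact z.2
      obtain ⟨s, hs⟩ := hsplit (ModuleCat.of Λᵐᵒᵖ K) hK (ModuleCat.of Λᵐᵒᵖ N) hYF
        (ModuleCat.of Λᵐᵒᵖ P) f g hfinj hgsurj hexact
      let s' : (K : Type u) →ₗ[Λᵐᵒᵖ] (P : Type u) := s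
      have hs' : g ∘ₗ s' = LinearMap.id := hs
      clear hs
      set ψ : (K : Type u) →ₗ[Λᵐᵒᵖ] (M : Type u) := P.subtype ∘ₗ s' with hψdef
      have hsinj : Function.Injective s' := by
        intro a b hab
        have := congrArg g hab
        rw [show g (s' a) = a from LinearMap.congr_fun hs' a,
          show g (s' b) = b from LinearMap.congr_fun hs' b] at this
        exact this
      have hψinj : Function.Injective ψ :=
        (Submodule.injective_subtype P).comp hsinj
      have hψ0 : ψ = 0 := hHom _ hK M hM ψ
      have hKbot : K = ⊥ := by
        rw [eq_bot_iff]
        intro x hx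
        have h0 : ψ ⟨x, hx⟩ = ψ 0 := by rw [hψ0]; simp
        have := hψinj h0
        simp only [Submodule.mem_bot]
        exact Subtype.ext_iff.mp this
      exact hFiso (LinearEquiv.toModuleIso (Submodule.quotEquivOfEqBot K hKbot)) hQK
  · -- (2) → (1)
    rintro ⟨hTsub, hFquot⟩ X hX Y hY E f g hfinj hgsurj hexact
    have hXfin := hTfin X hX
    have hYfin := hFfin Y hY
    have hrange : LinearMap.range f = LinearMap.ker g := (LinearMap.exact_iff.mp hexact).symm
    have hXno : IsNoetherian Λᵐᵒᵖ X := isNoetherian_of_isNoetherianRing_of_finite Λᵐᵒᵖ X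
    have hYno : IsNoetherian Λᵐᵒᵖ Y := isNoetherian_of_isNoetherianRing_of_finite Λᵐᵒᵖ Y
    have hEno : IsNoetherian Λᵐᵒᵖ E := isNoetherian_of_range_eq_ker f g hrange
    have hEfin : Module.Finite Λᵐᵒᵖ E := inferInstance
    obtain ⟨Nt, hNt, hNf⟩ := hTP E hEfin
    set γ : (Nt : Type u) →ₗ[Λᵐᵒᵖ] (X : Type u) := g ∘ₗ Nt.subtype with hγdef
    have hγinj : Function.Injective γ := by
      set K : Submodule Λᵐᵒᵖ (Nt : Type u) := LinearMap.ker γ with hKdef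
      have hKT : ModuleCat.of Λᵐᵒᵖ K ∈ T := hTsub (ModuleCat.of Λᵐᵒᵖ Nt) hNt K
      have hmem : ∀ x : (K : Type u), (Nt.subtype ∘ₗ K.subtype) x ∈ LinearMap.range f := by
        intro x
        rw [hrange, LinearMap.mem_ker]
        exact x.2
      set δ : (K : Type u) →ₗ[Λᵐᵒᵖ] (Y : Type u) :=
        (LinearEquiv.ofInjective f hfinj).symm.toLinearMap ∘ₗ
          LinearMap.codRestrict (LinearMap.range f) (Nt.subtype ∘ₗ K.subtype) hmem with hδdef
      have hδinj : Function.Injective δ := by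
        intro a b hab
        have h1 : (LinearMap.codRestrict (LinearMap.range f) (Nt.subtype ∘ₗ K.subtype) hmem) a
            = (LinearMap.codRestrict (LinearMap.range f) (Nt.subtype ∘ₗ K.subtype) hmem) b :=
          (LinearEquiv.ofInjective f hfinj).symm.injective hab
        have h2 := Subtype.ext_iff.mp h1
        rw [LinearMap.codRestrict_apply, LinearMap.codRestrict_apply] at h2
        have h3 : (Nt.subtype ∘ₗ K.subtype) a = (Nt.subtype ∘ₗ K.subtype) b := h2
        exact ((Submodule.injective_subtype Nt).comp (Submodule.injective_subtype K)) h3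
      have hδ0 : δ = 0 := hHom _ hKT Y hY δ
      rw [← LinearMap.ker_eq_bot, ← hKdef, eq_bot_iff]
      intro x hx
      have h0 : δ ⟨x, hx⟩ = δ 0 := by rw [hδ0]; simp
      have := hδinj h0
      simp only [Submodule.mem_bot]
      exact Subtype.ext_iff.mp this
    have hγsurj : Function.Surjective γ := by
      set Q := (X : Type u) ⧸ LinearMap.range γ with hQdef
      have hle : Nt ≤ LinearMap.ker ((LinearMap.range γ).mkQ ∘ₗ g) := by
        intro n hn
        rw [LinearMap.mem_ker, LinearMap.comp_apply, Submodule.mkQ_apply,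
          Submodule.Quotient.mk_eq_zero]
        exact ⟨⟨n, hn⟩, rfl⟩
      set μ : ((E : Type u) ⧸ Nt) →ₗ[Λᵐᵒᵖ] Q :=
        Nt.liftQ ((LinearMap.range γ).mkQ ∘ₗ g) hle with hμdef
      have hμsurj : Function.Surjective μ := by
        intro q
        obtain ⟨x, rfl⟩ := Submodule.Quotient.mk_surjective _ q
        obtain ⟨e, rfl⟩ := hgsurj x
        exact ⟨Submodule.Quotient.mk e, by rw [hμdef, Submodule.liftQ_apply]; rfl⟩
      have hQF : ModuleCat.of Λᵐᵒᵖ Q ∈ F := by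
        have h1 := hFquot (ModuleCat.of Λᵐᵒᵖ ((E : Type u) ⧸ Nt)) hNf (LinearMap.ker μ)
        exact hFiso (LinearEquiv.toModuleIso (μ.quotKerEquivOfSurjective hμsurj)) h1
      have hν0 : (LinearMap.range γ).mkQ = 0 := hHom X hX _ hQF _
      rw [← LinearMap.range_eq_top, eq_top_iff]
      intro x _
      have := LinearMap.congr_fun hν0 x
      rw [LinearMap.zero_apply, Submodule.mkQ_apply, Submodule.Quotient.mk_eq_zero] at this
      exact this
    set e : (Nt : Type u) ≃ₗ[Λᵐᵒᵖ] (X : Type u) :=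
      LinearEquiv.ofBijective γ ⟨hγinj, hγsurj⟩ with hedef
    refine ⟨Nt.subtype ∘ₗ e.symm.toLinearMap, ?_⟩
    ext x
    have h1 : γ (e.symm x) = x := e.apply_symm_apply x
    simpa [hγdef, LinearMap.comp_apply] using h1
end
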